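/- For every n and d ≥ 1, there exists a family C of subsets of ω^n such that VC_n(C) = d and π_{C,n}(m) ≥ 2^{z_n(m,d+1) − 1} for every m ≥ d. -/

import Mathlib

/-- `A` is a box of size `m` in the product `∏ i, X i`: each side has `m` elements. -/
def IsBox {n : ℕ} {X : Fin n → Type*} (A : ∀ i, Finset (X i)) (m : ℕ) : Prop :=
  ∀ i, (A i).card = m

/-- The subset of the product determined by a box. -/
def boxSet {n : ℕ} {X : Fin n → Type*} (A : ∀ i, Finset (X i)) : Set (∀ i, X i) :=
  {f | ∀ i, f i ∈ A i}

/-- The traces of a family `𝒞` on the box `A`. -/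
def traces {n : ℕ} {X : Fin n → Type*} (𝒞 : Set (Set (∀ i, X i)))
    (A : ∀ i, Finset (X i)) : Set (Set (∀ i, X i)) :=
  {s | ∃ C ∈ 𝒞, s = C ∩ boxSet A}

/-- `𝒞` shatters the box `A`. -/
def ShattersBox {n : ℕ} {X : Fin n → Type*} (𝒞 : Set (Set (∀ i, X i)))
    (A : ∀ i, Finset (X i)) : Prop :=
  ∀ B ⊆ boxSet A, ∃ C ∈ 𝒞, C ∩ boxSet A = B

/-- An `n`-partite `n`-uniform hypergraph with parts of size `m` (modelled with all parts
equal to `Fin m` and edge set `E`) contains a complete `n`-partite subhypergraph with all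
parts of size `d`. -/
def ContainsComplete (n m : ℕ) (E : Finset (Fin n → Fin m)) (d : ℕ) : Prop :=
  ∃ B : Fin n → Finset (Fin m), (∀ i, (B i).card = d) ∧
    ∀ f : Fin n → Fin m, (∀ i, f i ∈ B i) → f ∈ E

/-- The Zarankiewicz number `z_n(m, d)`: the least `z` such that every `n`-partite
`n`-uniform hypergraph with parts of size `m` and at least `z` edges contains a complete
`n`-partite subhypergraph with all parts of size `d`. -/
noncomputable def zar (n m d : ℕ) : ℕ :=
  sInf {z : ℕ | ∀ E : Finset (Fin n → Fin m), z ≤ E.card → ContainsComplete n m E d}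

lemma exists_good_E (n m d : ℕ) :
    ∃ E : Finset (Fin n → Fin m), zar n m (d + 1) - 1 ≤ E.card ∧
      ¬ ContainsComplete n m E (d + 1) := by
  classical
  set Z : Set ℕ :=
    {z : ℕ | ∀ E : Finset (Fin n → Fin m), z ≤ E.card → ContainsComplete n m E (d + 1)} with hZ
  have hzar : zar n m (d + 1) = sInf Z := rfl
  have hZne : (m ^ n + 1) ∈ Z := by
    intro E hE
    exfalso
    have h1 : E.card ≤ Fintype.card (Fin n → Fin m) := Finset.card_le_univ E
    rw [Fintype.card_fun, Fintype.card_fin, Fintype.card_fin] at h1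
    omega
  have h0 : (0 : ℕ) ∉ Z := by
    intro h
    obtain ⟨B, hB, hall⟩ := h ∅ (Nat.zero_le _)
    have hne : ∀ i, (B i).Nonempty := fun i => Finset.card_pos.mp (by rw [hB i]; omega)
    have := hall (fun i => (hne i).choose) (fun i => (hne i).choose_spec)
    simp at this
  have hzpos : 1 ≤ zar n m (d + 1) := by
    rcases Nat.eq_zero_or_pos (zar n m (d + 1)) with h | h
    · exfalso
      rw [hzar] at h
      rcases Nat.sInf_eq_zero.mp h with h' | h'
      · exact h0 h'
      · rw [h'] at hZne; exact hZne
    · exact h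
  have hnot : zar n m (d + 1) - 1 ∉ Z := by
    intro h
    have := Nat.sInf_le h
    omega
  rw [hZ, Set.mem_setOf_eq] at hnot
  push_neg at hnot
  exact hnot

lemma boxSet_finite {n : ℕ} (A : Fin n → Finset ℕ) : (boxSet A).Finite := by
  classical
  have : boxSet A = ↑(Fintype.piFinset A) := by
    ext f; simp [boxSet, Fintype.mem_piFinset]
  rw [this]; exact (Fintype.piFinset A).finite_toSet


/-- For every `n ≥ 1` and `d ≥ 1` there is a family `𝒞` of subsets of `ω^n` with
`VC_n(𝒞) = d` (some box of size `d` is shattered, no box of size `d + 1` is) such that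
`π_{𝒞,n}(m) ≥ 2 ^ (z_n(m, d+1) - 1)` for every `m ≥ d` (witnessed by some box of size `m`). -/
theorem stmt_7 (n d : ℕ) (hn : 0 < n) (hd : 1 ≤ d) :
    ∃ 𝒞 : Set (Set (Fin n → ℕ)),
      (∃ A : Fin n → Finset ℕ, IsBox A d ∧ ShattersBox 𝒞 A) ∧
      (∀ A : Fin n → Finset ℕ, IsBox A (d + 1) → ¬ ShattersBox 𝒞 A) ∧
      (∀ m : ℕ, d ≤ m → ∃ A : Fin n → Finset ℕ, IsBox A m ∧
        2 ^ (zar n m (d + 1) - 1) ≤ (traces 𝒞 A).ncard) := by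
  classical
  choose E hE1 hE2 using fun m => exists_good_E n m d
  -- embedding of block m
  set embF : ∀ m : ℕ, (Fin n → Fin m) → (Fin n → ℕ) :=
    fun m f i => Nat.pair (m + 1) (f i) with hembF
  have embF_inj : ∀ m, Function.Injective (embF m) := by
    intro m f g h
    funext i
    have := congrFun h i
    simp only [hembF] at this
    exact Fin.ext (Nat.pair_eq_pair.mp this).2
  set Sfin : ∀ m : ℕ, Finset (Fin n → ℕ) := fun m => (E m).image (embF m) with hSfin
  set B0 : Fin n → Finset ℕ := fun _ => (Finset.range d).image (Nat.pair 0) with hB0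
  have pair_inj : ∀ k : ℕ, Function.Injective (Nat.pair k) :=
    fun k a b h => (Nat.pair_eq_pair.mp h).2
  set 𝒞 : Set (Set (Fin n → ℕ)) :=
    {C | C ⊆ boxSet B0} ∪ ⋃ m : ℕ, {C | C ⊆ ↑(Sfin m)} with h𝒞
  refine ⟨𝒞, ⟨B0, ?_, ?_⟩, ?_, ?_⟩
  · -- IsBox B0 d
    intro i
    rw [hB0, Finset.card_image_of_injective _ (pair_inj 0), Finset.card_range]
  · -- shatters B0
    intro B hB
    exact ⟨B, Or.inl hB, Set.inter_eq_left.mpr hB⟩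
  · -- no shattered box of size d+1
    intro A hA hsh
    obtain ⟨C, hC, hCA⟩ := hsh (boxSet A) (subset_refl _)
    have hsub : boxSet A ⊆ C := by
      intro x hx; rw [← hCA] at hx; exact hx.1
    have hAne : ∀ i, (A i).Nonempty := fun i => Finset.card_pos.mp (by rw [hA i]; omega)
    set f0 : Fin n → ℕ := fun i => (hAne i).choose with hf0
    have hf0mem : ∀ i, f0 i ∈ A i := fun i => (hAne i).choose_spec
    have hpoint : ∀ (i : Fin n) (a : ℕ), a ∈ A i → Function.update f0 i a ∈ boxSet A := by
      intro i a ha j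
      rcases eq_or_ne j i with rfl | hji
      · simpa using ha
      · simpa [Function.update_of_ne hji] using hf0mem j
    rcases hC with hC | hC
    · -- C ⊆ boxSet B0
      have hAB : A ⟨0, hn⟩ ⊆ B0 ⟨0, hn⟩ := by
        intro a ha
        have := hC (hsub (hpoint ⟨0, hn⟩ a (by simpa using ha))) ⟨0, hn⟩
        simpa using this
      have := Finset.card_le_card hAB
      rw [hA, hB0] at this
      have := le_trans this (Finset.card_image_le)
      rw [Finset.card_range] at this
      omega
    · -- C ⊆ Sfin m for some m
      simp only [Set.mem_iUnion, Set.mem_setOf_eq] at hC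
      obtain ⟨m, hCm⟩ := hC
      have hAS : boxSet A ⊆ ↑(Sfin m) := fun x hx => hCm (hsub hx)
      set Bm : Fin n → Finset (Fin m) :=
        fun i => Finset.univ.filter (fun j : Fin m => Nat.pair (m + 1) (j : ℕ) ∈ A i) with hBm
      have hAeq : ∀ i, A i = (Bm i).image (fun j : Fin m => Nat.pair (m + 1) (j : ℕ)) := by
        intro i
        apply Finset.Subset.antisymm
        · intro a ha
          have hmem := hAS (hpoint i a ha)
          rw [Finset.mem_coe, hSfin, Finset.mem_image] at hmem
          obtain ⟨f, hf, hfeq⟩ := hmem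
          have hai : a = Nat.pair (m + 1) ((f i : ℕ)) := by
            have h' := congrFun hfeq i
            simp only [hembF, Function.update_self] at h'
            exact h'.symm
          rw [Finset.mem_image]
          exact ⟨f i, by simp [hBm, ← hai, ha], hai.symm⟩
        · intro a ha
          rw [Finset.mem_image] at ha
          obtain ⟨j, hj, rfl⟩ := ha
          simp only [hBm, Finset.mem_filter] at hj
          exact hj.2
      have hBmcard : ∀ i, (Bm i).card = d + 1 := by
        intro i
        have := hA i
        rw [hAeq i, Finset.card_image_of_injective _
          (fun a b h => Fin.ext (Nat.pair_eq_pair.mp h).2)] at this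
        exact this
      apply hE2 m
      refine ⟨Bm, hBmcard, ?_⟩
      intro f hf
      have hmem : embF m f ∈ boxSet A := by
        intro i
        rw [hAeq i, Finset.mem_image]
        exact ⟨f i, hf i, rfl⟩
      have := hAS hmem
      rw [Finset.mem_coe, hSfin, Finset.mem_image] at this
      obtain ⟨g, hg, hgeq⟩ := this
      rwa [← embF_inj m hgeq]
  · -- trace bound
    intro m hm
    set A : Fin n → Finset ℕ := fun _ => (Finset.range m).image (Nat.pair (m + 1)) with hA
    have hbox : IsBox A m := by
      intro i
      rw [hA, Finset.card_image_of_injective _ (pair_inj (m + 1)), Finset.card_range]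
    refine ⟨A, hbox, ?_⟩
    have hSsub : (↑(Sfin m) : Set (Fin n → ℕ)) ⊆ boxSet A := by
      intro x hx i
      rw [Finset.mem_coe, hSfin, Finset.mem_image] at hx
      obtain ⟨f, hf, rfl⟩ := hx
      rw [hA, Finset.mem_image]
      exact ⟨f i, Finset.mem_range.mpr (f i).isLt, rfl⟩
    set P : Finset (Set (Fin n → ℕ)) := (Sfin m).powerset.image (fun T : Finset (Fin n → ℕ) => (↑T : Set (Fin n → ℕ))) with hP
    have hPsub : ↑P ⊆ traces 𝒞 A := by
      intro s hs
      rw [Finset.mem_coe, hP, Finset.mem_image] at hs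
      obtain ⟨T, hT, rfl⟩ := hs
      rw [Finset.mem_powerset] at hT
      refine ⟨↑T, Or.inr (Set.mem_iUnion.mpr ⟨m, Finset.coe_subset.mpr hT⟩), ?_⟩
      exact (Set.inter_eq_left.mpr (fun x hx => hSsub (Finset.coe_subset.mpr hT hx))).symm
    have hfin : (traces 𝒞 A).Finite := by
      apply Set.Finite.subset ((boxSet_finite A).finite_subsets)
      rintro s ⟨C, _, rfl⟩
      exact Set.inter_subset_right
    have hcard : P.card = 2 ^ (Sfin m).card := by
      rw [hP, Finset.card_image_of_injective _ Finset.coe_injective, Finset.card_powerset]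
    have hSc : (Sfin m).card = (E m).card := by
      rw [hSfin]; exact Finset.card_image_of_injective _ (embF_inj m)
    calc 2 ^ (zar n m (d + 1) - 1) ≤ 2 ^ (E m).card :=
          Nat.pow_le_pow_right (by norm_num) (hE1 m)
      _ = P.card := by rw [hcard, hSc]
      _ = (↑P : Set (Set (Fin n → ℕ))).ncard := (Set.ncard_coe_finset P).symm
      _ ≤ (traces 𝒞 A).ncard := Set.ncard_le_ncard hPsub hfin
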